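/- For linear maps φ_i : M_{a_i} → M_{b_i} (i=1,2), φ_3 : M_{a_1} → M_{a_2}, and φ_4 : M_{b_1} → M_{b_2}, the identity ⟨(φ_1 ⊗ φ_2)(C_{φ_3}), C_{φ_4}⟩ = ⟨(φ_3 ⊗ φ_4)(C_{φ_1}), C_{φ_2}⟩ holds, where ⟨x,y⟩ = Tr(x yᵗ). -/

import Mathlib

open Matrix Kronecker BigOperators

noncomputable def choi {a b : ℕ}
    (φ : Matrix (Fin a) (Fin a) ℂ →ₗ[ℂ] Matrix (Fin b) (Fin b) ℂ) :
    Matrix (Fin a × Fin b) (Fin a × Fin b) ℂ :=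
  ∑ i : Fin a, ∑ j : Fin a,
    (Matrix.single i j (1 : ℂ)) ⊗ₖ φ (Matrix.single i j (1 : ℂ))

noncomputable def tensorMap {a₁ b₁ a₂ b₂ : ℕ}
    (φ₁ : Matrix (Fin a₁) (Fin a₁) ℂ →ₗ[ℂ] Matrix (Fin b₁) (Fin b₁) ℂ)
    (φ₂ : Matrix (Fin a₂) (Fin a₂) ℂ →ₗ[ℂ] Matrix (Fin b₂) (Fin b₂) ℂ)
    (M : Matrix (Fin a₁ × Fin a₂) (Fin a₁ × Fin a₂) ℂ) :
    Matrix (Fin b₁ × Fin b₂) (Fin b₁ × Fin b₂) ℂ :=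
  ∑ i : Fin a₁, ∑ j : Fin a₁,
    (φ₁ (Matrix.single i j (1 : ℂ))) ⊗ₖ
      (φ₂ (Matrix.of fun k l => M (i, k) (j, l)))

noncomputable def adS {a b : ℕ} (s : Matrix (Fin a) (Fin b) ℂ) :
    Matrix (Fin a) (Fin a) ℂ →ₗ[ℂ] Matrix (Fin b) (Fin b) ℂ where
  toFun x := sᴴ * x * s
  map_add' x y := by simp [Matrix.mul_add, Matrix.add_mul]
  map_smul' c x := by simp [Matrix.mul_smul, Matrix.smul_mul]

noncomputable def pairM {n : Type*} [Fintype n] (x y : Matrix n n ℂ) : ℂ := (x * yᵀ).trace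


lemma choi_apply {a b : ℕ}
    (φ : Matrix (Fin a) (Fin a) ℂ →ₗ[ℂ] Matrix (Fin b) (Fin b) ℂ)
    (i j : Fin a) (k l : Fin b) :
    choi φ (i, k) (j, l) = φ (Matrix.single i j 1) k l := by
  simp [choi, Matrix.sum_apply, Matrix.single, Matrix.kroneckerMap_apply,
    Finset.sum_ite_eq, ite_and]

lemma expand_map {a b : ℕ}
    (φ : Matrix (Fin a) (Fin a) ℂ →ₗ[ℂ] Matrix (Fin b) (Fin b) ℂ)
    (M : Matrix (Fin a) (Fin a) ℂ) (q s : Fin b) :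
    φ M q s = ∑ k, ∑ l, M k l * φ (Matrix.single k l 1) q s := by
  conv_lhs => rw [Matrix.matrix_eq_sum_single M]
  have h : ∀ (k l : Fin a), Matrix.single k l (M k l)
      = M k l • Matrix.single k l (1:ℂ) := by
    intro k l; rw [Matrix.smul_single, smul_eq_mul, mul_one]
  simp only [map_sum, Matrix.sum_apply]
  simp_rw [h, _root_.map_smul, Matrix.smul_apply, smul_eq_mul]

lemma pairM_eq {n : Type*} [Fintype n] (x y : Matrix n n ℂ) :
    pairM x y = ∑ u, ∑ v, x u v * y u v := by
  simp [pairM, Matrix.trace, Matrix.mul_apply, Matrix.diag]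

lemma key {a₁ b₁ a₂ b₂ : ℕ}
    (φ₁ : Matrix (Fin a₁) (Fin a₁) ℂ →ₗ[ℂ] Matrix (Fin b₁) (Fin b₁) ℂ)
    (φ₂ : Matrix (Fin a₂) (Fin a₂) ℂ →ₗ[ℂ] Matrix (Fin b₂) (Fin b₂) ℂ)
    (φ₃ : Matrix (Fin a₁) (Fin a₁) ℂ →ₗ[ℂ] Matrix (Fin a₂) (Fin a₂) ℂ)
    (φ₄ : Matrix (Fin b₁) (Fin b₁) ℂ →ₗ[ℂ] Matrix (Fin b₂) (Fin b₂) ℂ) :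
    pairM (tensorMap φ₁ φ₂ (choi φ₃)) (choi φ₄) =
      ∑ x : (Fin b₁ × Fin b₂) × ((Fin b₁ × Fin b₂) × ((Fin a₁ × Fin a₁) × (Fin a₂ × Fin a₂))),
        φ₁ (Matrix.single x.2.2.1.1 x.2.2.1.2 1) x.1.1 x.2.1.1 *
        φ₃ (Matrix.single x.2.2.1.1 x.2.2.1.2 1) x.2.2.2.1 x.2.2.2.2 *
        φ₂ (Matrix.single x.2.2.2.1 x.2.2.2.2 1) x.1.2 x.2.1.2 *
        φ₄ (Matrix.single x.1.1 x.2.1.1 1) x.1.2 x.2.1.2 := by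
  rw [pairM_eq]
  have hC : ∀ i j, (Matrix.of fun k l => choi φ₃ (i, k) (j, l))
      = φ₃ (Matrix.single i j 1) := by
    intro i j; ext k l; simp [choi_apply]
  simp only [Fintype.sum_prod_type, tensorMap, Matrix.sum_apply, Matrix.kroneckerMap_apply,
    hC, choi_apply]
  have hC' : ∀ M : Matrix (Fin a₁) (Fin a₁) ℂ,
      (Matrix.of fun k l => φ₃ M k l) = φ₃ M := fun M => rfl
  simp_rw [hC', expand_map φ₂ (φ₃ _)]
  simp only [Finset.sum_mul, Finset.mul_sum]
  iterate 8 refine Finset.sum_congr rfl fun _ _ => ?_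
  ring

/-- `⟨(φ₁ ⊗ φ₂)(C_{φ₃}), C_{φ₄}⟩ = ⟨(φ₃ ⊗ φ₄)(C_{φ₁}), C_{φ₂}⟩`. -/
theorem stmt_19 {a₁ b₁ a₂ b₂ : ℕ}
    (φ₁ : Matrix (Fin a₁) (Fin a₁) ℂ →ₗ[ℂ] Matrix (Fin b₁) (Fin b₁) ℂ)
    (φ₂ : Matrix (Fin a₂) (Fin a₂) ℂ →ₗ[ℂ] Matrix (Fin b₂) (Fin b₂) ℂ)
    (φ₃ : Matrix (Fin a₁) (Fin a₁) ℂ →ₗ[ℂ] Matrix (Fin a₂) (Fin a₂) ℂ)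
    (φ₄ : Matrix (Fin b₁) (Fin b₁) ℂ →ₗ[ℂ] Matrix (Fin b₂) (Fin b₂) ℂ) :
    pairM (tensorMap φ₁ φ₂ (choi φ₃)) (choi φ₄) =
      pairM (tensorMap φ₃ φ₄ (choi φ₁)) (choi φ₂) := by
  rw [key φ₁ φ₂ φ₃ φ₄, key φ₃ φ₄ φ₁ φ₂]
  exact Fintype.sum_equiv
    ⟨fun x => ((x.2.2.2.1, x.1.2), ((x.2.2.2.2, x.2.1.2), (x.2.2.1, (x.1.1, x.2.1.1)))),
     fun y => ((y.2.2.2.1, y.1.2), ((y.2.2.2.2, y.2.1.2), (y.2.2.1, (y.1.1, y.2.1.1)))),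
     fun _ => rfl, fun _ => rfl⟩
    _ _ (fun x => by simp only [Equiv.coe_fn_mk]; ring)
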